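/- Let ψ : ℝⁿ ⇉ ℝⁿ satisfy the (Γ₁)-condition, V : ℝⁿ → ℝⁿ be a mapping, μ > 0 and σ, τ > 0 constants. Let x : ℕ → ℝⁿ be a sequence satisfying the iteration x_{n+1} = x_n + (1 − σ)(x_n − x_{n−1}) + τ(P_{ψ(x_n)}(V(x_n) − μ x_n) − V(x_n)) for n ≥ 1, and let x* ∈ ℝⁿ. Define v_n := ‖x_n − x*‖², a_n := ‖x_{n+1} − x_n‖², c_n := ‖x_n − x_{n−1}‖², v^Δ(n) := v_{n+1} − v_n, v^∇(n) := v_n − v_{n−1}, v^{Δ∇}(n) := v^Δ(n) − v^∇(n), and c^Δ(n) := c_{n+1} − c_n. Then for every n ≥ 1, v^{Δ∇}(n) + σ v^∇(n) = 2τ⟨P_{ψ(x_n)}(V(x_n) − μ x_n) − V(x_n), x_n − x*⟩ + 2a_n − σ c_n − c^Δ(n). -/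
import Mathlib


open scoped RealInnerProductSpace
open MeasureTheory

/- Metric projection onto a set `C ⊆ ℝⁿ`: when `C` is nonempty, closed and convex this is
the unique nearest point of `C`. -/
open Classical in
noncomputable def metricProj {d : ℕ} (C : Set (EuclideanSpace ℝ (Fin d)))
    (x : EuclideanSpace ℝ (Fin d)) : EuclideanSpace ℝ (Fin d) :=
  if h : ∃ y, y ∈ C ∧ ∀ z ∈ C, ‖x - y‖ ≤ ‖x - z‖ then h.choose else x

/-- For the iteration
`x_{n+1} = x_n + (1 − σ)(x_n − x_{n−1}) + τ (P_{ψ(x_n)}(V(x_n) − μ x_n) − V(x_n))`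
and any `x*`, with `v_n = ‖x_n − x*‖²`, `a_n = ‖x_{n+1} − x_n‖²`, `c_n = ‖x_n − x_{n−1}‖²`,
one has `v^{Δ∇}(n) + σ v^∇(n)
  = 2τ ⟨P_{ψ(x_n)}(V(x_n) − μ x_n) − V(x_n), x_n − x*⟩ + 2a_n − σ c_n − c^Δ(n)`. -/
theorem stmt_16 {d : ℕ} (ψ : EuclideanSpace ℝ (Fin d) → Set (EuclideanSpace ℝ (Fin d)))
    (V : EuclideanSpace ℝ (Fin d) → EuclideanSpace ℝ (Fin d)) (μ σ τ : ℝ)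
    (hμ : 0 < μ) (hσ : 0 < σ) (hτ : 0 < τ)
    (hΓ₁ : ∀ x, (ψ x).Nonempty ∧ IsClosed (ψ x) ∧ Convex ℝ (ψ x))
    (x : ℕ → EuclideanSpace ℝ (Fin d))
    (hiter : ∀ n : ℕ, 1 ≤ n →
      x (n+1) = x n + (1 - σ) • (x n - x (n-1)) +
        τ • (metricProj (ψ (x n)) (V (x n) - μ • x n) - V (x n)))
    (xs : EuclideanSpace ℝ (Fin d)) :
    ∀ n : ℕ, 1 ≤ n →
      ((‖x (n+1) - xs‖ ^ 2 - ‖x n - xs‖ ^ 2) - (‖x n - xs‖ ^ 2 - ‖x (n-1) - xs‖ ^ 2))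
          + σ * (‖x n - xs‖ ^ 2 - ‖x (n-1) - xs‖ ^ 2)
        = 2 * τ * ⟪metricProj (ψ (x n)) (V (x n) - μ • x n) - V (x n), x n - xs⟫
          + 2 * ‖x (n+1) - x n‖ ^ 2 - σ * ‖x n - x (n-1)‖ ^ 2
          - (‖x (n+1) - x n‖ ^ 2 - ‖x n - x (n-1)‖ ^ 2) := by
  intro n hn
  have h := hiter n hn
  set q := metricProj (ψ (x n)) (V (x n) - μ • x n) - V (x n) with hq
  have e1 : x (n+1) - xs = (x n - xs) + ((1-σ) • (x n - x (n-1)) + τ • q) := by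
    rw [h]; module
  have e2 : x (n-1) - xs = (x n - xs) - (x n - x (n-1)) := by module
  have e3 : x (n+1) - x n = (1-σ) • (x n - x (n-1)) + τ • q := by
    rw [h]; module
  rw [e1, e2, e3]
  simp only [← real_inner_self_eq_norm_sq, inner_add_left, inner_add_right,
    inner_sub_left, inner_sub_right, real_inner_smul_left, real_inner_smul_right]
  ring_nf
  rw [real_inner_comm (x n) q, real_inner_comm xs q, real_inner_comm (x (n-1)) q]
  ring
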